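/- Let V₁ be a vector space over a field F, A₁ ≤ GL(V₁) a non-trivial subgroup, and P ≤ Sym(ℓ) a transitive subgroup. Then the wreath product A₁ ≀ P acting on V₁^{⊕ℓ} (componentwise with permutation of components) is irreducible if and only if A₁ is irreducible on V₁. -/
import Mathlib


/-- Clifford: Let `V₁` be a vector space over a field `F`,
`A₁ ≤ GL(V₁)` a non-trivial subgroup and `P ≤ Sym(ℓ)` a transitive subgroup.
The wreath product `A₁ ≀ P` acting on `V₁^{⊕ℓ}` (the base group acting
componentwise, `P` permuting the summands) is irreducible if and only if `A₁`
is irreducible on `V₁`. -/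
theorem stmt11 {F V₁ : Type*} [Field F] [AddCommGroup V₁] [Module F V₁]
    (A₁ : Subgroup (V₁ ≃ₗ[F] V₁)) (hA₁ : A₁ ≠ ⊥)
    (ℓ : ℕ) (hl : 1 ≤ ℓ)
    (P : Subgroup (Equiv.Perm (Fin ℓ)))
    (htrans : ∀ i j : Fin ℓ, ∃ σ ∈ P, σ i = j) :
    (∀ W : Submodule F (Fin ℓ → V₁),
        ((∀ a : Fin ℓ → (V₁ ≃ₗ[F] V₁), (∀ i, a i ∈ A₁) →
            ∀ f ∈ W, (fun i => a i (f i)) ∈ W) ∧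
         (∀ σ ∈ P, ∀ f ∈ W, (fun i => f (σ⁻¹ i)) ∈ W)) →
        W = ⊥ ∨ W = ⊤) ↔
      (∀ U : Submodule F V₁,
        (∀ a ∈ A₁, ∀ v ∈ U, a v ∈ U) → U = ⊥ ∨ U = ⊤) := by
  constructor
  · -- wreath irreducible → A₁ irreducible
    intro h U hU
    have hW := h (Submodule.pi Set.univ (fun _ => U)) ?_
    · rcases hW with hW | hW
      · left
        ext v
        simp only [Submodule.mem_bot]
        constructor
        · intro hv
          have hmem : (fun _ : Fin ℓ => v) ∈ Submodule.pi Set.univ (fun _ => U) := by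
            intro i _; exact hv
          rw [hW] at hmem
          have := congrFun ((Submodule.mem_bot F).mp hmem) ⟨0, hl⟩
          exact this
        · rintro rfl; exact U.zero_mem
      · right
        ext v
        simp only [Submodule.mem_top, iff_true]
        have hmem : (fun _ : Fin ℓ => v) ∈ Submodule.pi Set.univ (fun _ => U) := by
          rw [hW]; trivial
        exact hmem ⟨0, hl⟩ trivial
    · constructor
      · intro a ha f hf i _
        exact hU (a i) (ha i) (f i) (hf i trivial)
      · intro σ _ f hf i _
        exact hf (σ⁻¹ i) trivial
  · -- A₁ irreducible → wreath irreducible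
    intro h W hWinv
    obtain ⟨hbase, hperm⟩ := hWinv
    by_cases hbot : W = ⊥
    · left; exact hbot
    right
    obtain ⟨f, hfW, hf0⟩ := (Submodule.ne_bot_iff W).mp hbot
    obtain ⟨i, hfi⟩ : ∃ i, f i ≠ 0 := by
      by_contra hcon
      push_neg at hcon
      exact hf0 (funext fun j => hcon j)
    have h1 : (1 : V₁ ≃ₗ[F] V₁) ∈ A₁ := A₁.one_mem
    -- every nonzero vector is moved by some element of A₁
    have hfix : ∀ v : V₁, v ≠ 0 → ∃ a ∈ A₁, a v ≠ v := by
      intro v hv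
      by_contra hcon
      push_neg at hcon
      set Ufix : Submodule F V₁ :=
        { carrier := {w | ∀ a ∈ A₁, a w = w}
          add_mem' := by intro x y hx hy a ha; simp [map_add, hx a ha, hy a ha]
          zero_mem' := by intro a ha; simp
          smul_mem' := by intro c x hx a ha; simp [map_smul, hx a ha] } with hUfix
      have hinv : ∀ a ∈ A₁, ∀ w ∈ Ufix, a w ∈ Ufix := by
        intro a ha w hw
        have hww : a w = w := hw a ha
        rw [hww]; exact hw
      obtain ⟨x, hxA, hx1⟩ : ∃ x ∈ A₁, x ≠ 1 := by
        by_contra hc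
        push_neg at hc
        exact hA₁ ((Subgroup.eq_bot_iff_forall A₁).mpr hc)
      obtain ⟨w, hw⟩ : ∃ w, x w ≠ w := by
        by_contra hc
        push_neg at hc
        exact hx1 (LinearEquiv.ext fun w => hc w)
      rcases h Ufix hinv with hB | hT
      · have hvU : v ∈ Ufix := fun a ha => hcon a ha
        rw [hB] at hvU
        exact hv hvU
      · have hwU : w ∈ Ufix := by rw [hT]; trivial
        exact hw (hwU x hxA)
    obtain ⟨a, haA, hav⟩ := hfix (f i) hfi
    classical
    -- produce a nonzero element of W supported at i
    set b : Fin ℓ → (V₁ ≃ₗ[F] V₁) := fun j => if j = i then a else 1 with hb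
    have hbA : ∀ j, b j ∈ A₁ := by
      intro j; by_cases hj : j = i <;> simp [hb, hj, haA, h1]
    have hf' : (fun j => b j (f j)) ∈ W := hbase b hbA f hfW
    have hg : (fun j => b j (f j)) - f ∈ W := W.sub_mem hf' hfW
    have hgeq : (fun j => b j (f j)) - f = Pi.single i (a (f i) - f i) := by
      funext j
      by_cases hj : j = i
      · subst hj; simp [hb]
      · simp [hb, hj, Pi.single_eq_of_ne hj]
    rw [hgeq] at hg
    set U : Submodule F V₁ :=
      { carrier := {v | Pi.single i v ∈ W}
        add_mem' := by
          intro x y hx hy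
          have := W.add_mem hx hy
          simpa [← Pi.single_add] using this
        zero_mem' := by
          show Pi.single i (0 : V₁) ∈ W
          rw [Pi.single_zero]
          exact W.zero_mem
        smul_mem' := by
          intro c x hx
          have := W.smul_mem c hx
          simp only [← Pi.single_smul] at this
          exact this } with hUdef
    have hUinv : ∀ a' ∈ A₁, ∀ v ∈ U, a' v ∈ U := by
      intro a' ha' v hv
      have hc : ∀ j, (if j = i then a' else 1 : V₁ ≃ₗ[F] V₁) ∈ A₁ := by
        intro j; split <;> simp [ha', h1]
      have hmem := hbase (fun j => if j = i then a' else 1) hc (Pi.single i v) hv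
      have heq : (fun j => (if j = i then a' else 1 : V₁ ≃ₗ[F] V₁) ((Pi.single i v : Fin ℓ → V₁) j))
          = Pi.single i (a' v) := by
        funext j
        by_cases hj : j = i
        · subst hj; simp
        · simp [hj, Pi.single_eq_of_ne hj]
      show Pi.single i (a' v) ∈ W
      rwa [heq] at hmem
    have hUtop : U = ⊤ := by
      rcases h U hUinv with hB | hT
      · exfalso
        have hmem : (a (f i) - f i) ∈ U := hg
        rw [hB] at hmem
        rw [Submodule.mem_bot, sub_eq_zero] at hmem
        exact hav hmem
      · exact hT
    have hsingle : ∀ (j : Fin ℓ) (v : V₁), Pi.single j v ∈ W := by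
      intro j v
      obtain ⟨σ, hσ, hσi⟩ := htrans i j
      have hvU : Pi.single i v ∈ W := by
        have : v ∈ U := by rw [hUtop]; trivial
        exact this
      have hmem := hperm σ hσ (Pi.single i v) hvU
      have heq : (fun k => (Pi.single i v : Fin ℓ → V₁) (σ⁻¹ k)) = Pi.single j v := by
        funext k
        by_cases hk : k = j
        · subst hk
          have hik : σ⁻¹ k = i := by rw [← hσi]; simp
          rw [hik]; simp
        · have hik : σ⁻¹ k ≠ i := by
            intro hcc
            apply hk
            rw [← hσi, ← hcc]
            simp
          rw [Pi.single_eq_of_ne hik, Pi.single_eq_of_ne hk]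
      rwa [heq] at hmem
    rw [Submodule.eq_top_iff']
    intro g
    have hsum : g = ∑ j, Pi.single j (g j) := (Finset.univ_sum_single g).symm
    rw [hsum]
    exact Submodule.sum_mem W (fun j _ => hsingle j (g j))
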